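/- Suppose n is even and k = n/2 − 1, so that ν := k − n/2 + 1 = 0. Then the consecutive-generation ratio diverges logarithmically at the origin: γ_k(z) / log(1/z) → n/B as z → 0⁺. -/

import Mathlib

open Real MeasureTheory Set Filter Topology

/-- The steady-state generation-`k` density in the normalized distance
`z = |x|√(λ/D)` from the origin:
`𝒜_k(z) = (μ(λB)^k/(k!(4πD)^{n/2})) ∫₀^∞ s^{k−n/2} exp(−λs − z²/(4λs)) ds`. -/
noncomputable def steadyDensity (n : ℕ) (lam D B mu : ℝ) (k : ℕ) (z : ℝ) : ℝ :=
  (mu * (lam * B) ^ k / ((Nat.factorial k : ℝ) * (4 * π * D) ^ ((n : ℝ) / 2))) *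
    ∫ s in Set.Ioi (0:ℝ),
      s ^ ((k : ℝ) - (n : ℝ) / 2) * Real.exp (-lam * s - z ^ 2 / (4 * lam * s))

/-- The consecutive-generation ratio `γ_k(z) = 𝒜_k(z)/𝒜_{k+1}(z)`. -/
noncomputable def genRatio (n : ℕ) (lam D B mu : ℝ) (k : ℕ) (z : ℝ) : ℝ :=
  steadyDensity n lam D B mu k z / steadyDensity n lam D B mu (k + 1) z

lemma integrableOn_exp_term (lam : ℝ) (hlam : 0 < lam) (z : ℝ) :
    IntegrableOn (fun s : ℝ => Real.exp (-lam * s - z ^ 2 / (4 * lam * s))) (Ioi 0) := by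
  apply Integrable.mono (exp_neg_integrableOn_Ioi 0 hlam)
  · exact (by fun_prop : Measurable fun s : ℝ => Real.exp (-lam * s - z ^ 2 / (4 * lam * s))).aestronglyMeasurable
  · filter_upwards [ae_restrict_mem measurableSet_Ioi] with s hs
    simp only [Real.norm_eq_abs, abs_of_pos (Real.exp_pos _), Real.exp_le_exp]
    have hs' : (0:ℝ) < s := hs
    have : 0 ≤ z ^ 2 / (4 * lam * s) := div_nonneg (sq_nonneg z) (by nlinarith)
    linarith

lemma tendsto_I1 (lam : ℝ) (hlam : 0 < lam) :
    Tendsto (fun z : ℝ => ∫ s in Ioi (0:ℝ), Real.exp (-lam * s - z ^ 2 / (4 * lam * s)))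
      (nhdsWithin 0 (Ioi 0)) (nhds lam⁻¹) := by
  have hval : ∫ s in Ioi (0:ℝ), Real.exp (-lam * s) = lam⁻¹ := by
    have := integral_exp_neg_mul_rpow one_pos hlam
    simp only [Real.rpow_one] at this
    rw [this]; norm_num [Real.Gamma_two, Real.rpow_neg_one]
  rw [← hval]
  apply MeasureTheory.tendsto_integral_filter_of_dominated_convergence
      (fun s => Real.exp (-lam * s))
  · filter_upwards with z
    exact (by fun_prop : Measurable fun s : ℝ => Real.exp (-lam * s - z ^ 2 / (4 * lam * s))).aestronglyMeasurable
  · filter_upwards [self_mem_nhdsWithin] with z (hz : z ∈ Ioi (0:ℝ))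
    filter_upwards [ae_restrict_mem measurableSet_Ioi] with s hs
    simp only [Real.norm_eq_abs, abs_of_pos (Real.exp_pos _), Real.exp_le_exp]
    have hs' : (0:ℝ) < s := hs
    have : 0 ≤ z ^ 2 / (4 * lam * s) := div_nonneg (sq_nonneg z) (by nlinarith)
    linarith
  · exact exp_neg_integrableOn_Ioi 0 hlam
  · filter_upwards [ae_restrict_mem measurableSet_Ioi] with s hs
    have hcont : Tendsto (fun z : ℝ => Real.exp (-lam * s - z ^ 2 / (4 * lam * s)))
        (nhds 0) (nhds (Real.exp (-lam * s - 0 ^ 2 / (4 * lam * s)))) := by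
      apply Continuous.tendsto; fun_prop
    simpa using hcont.mono_left nhdsWithin_le_nhds

noncomputable def fJ (lam z s : ℝ) : ℝ :=
  s ^ (-1:ℝ) * Real.exp (-lam * s - z ^ 2 / (4 * lam * s))

lemma fJ_nonneg (lam z : ℝ) {s : ℝ} (hs : 0 < s) : 0 ≤ fJ lam z s :=
  mul_nonneg (Real.rpow_nonneg hs.le _) (Real.exp_pos _).le

lemma fJ_le_bound1 {lam z s : ℝ} (hlam : 0 < lam) (hz : 0 < z) (hs : 0 < s) :
    fJ lam z s ≤ 4 * lam / z ^ 2 := by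
  have hw : 0 < z ^ 2 / (4 * lam * s) := div_pos (by positivity) (by positivity)
  have h1 : Real.exp (-lam * s - z ^ 2 / (4 * lam * s)) ≤ Real.exp (-(z ^ 2 / (4 * lam * s))) := by
    apply Real.exp_le_exp.2; nlinarith
  have h2 : Real.exp (-(z ^ 2 / (4 * lam * s))) ≤ (z ^ 2 / (4 * lam * s))⁻¹ := by
    rw [Real.exp_neg]
    exact inv_anti₀ hw (by linarith [Real.add_one_le_exp (z ^ 2 / (4 * lam * s))])
  have h3 : (z ^ 2 / (4 * lam * s))⁻¹ = 4 * lam * s / z ^ 2 := by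
    rw [inv_div]
  have hsr : s ^ (-1:ℝ) = s⁻¹ := Real.rpow_neg_one s
  calc fJ lam z s ≤ s⁻¹ * (4 * lam * s / z ^ 2) := by
        rw [fJ, hsr]
        exact mul_le_mul_of_nonneg_left (h1.trans (h2.trans_eq h3)) (by positivity)
    _ = 4 * lam / z ^ 2 := by field_simp

lemma fJ_le_exp {lam z s : ℝ} (hlam : 0 < lam) (hz : 0 < z) (hs : 1 ≤ s) :
    fJ lam z s ≤ Real.exp (-lam * s) := by
  have hs0 : (0:ℝ) < s := lt_of_lt_of_le one_pos hs
  have hsr : s ^ (-1:ℝ) = s⁻¹ := Real.rpow_neg_one s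
  have h1 : s⁻¹ ≤ 1 := by rw [inv_le_one_iff₀]; right; exact hs
  have hw : 0 ≤ z ^ 2 / (4 * lam * s) := div_nonneg (sq_nonneg z) (by nlinarith)
  calc fJ lam z s ≤ 1 * Real.exp (-lam * s - z ^ 2 / (4 * lam * s)) := by
        rw [fJ, hsr]
        exact mul_le_mul_of_nonneg_right h1 (Real.exp_pos _).le
    _ ≤ Real.exp (-lam * s) := by
        rw [one_mul, Real.exp_le_exp]
        linarith

lemma fJ_meas (lam z : ℝ) : Measurable (fJ lam z) := by unfold fJ; fun_prop

lemma integrableOn_fJ_Ioc {lam z : ℝ} (hlam : 0 < lam) (hz : 0 < z) {b : ℝ} :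
    IntegrableOn (fJ lam z) (Ioc 0 b) := by
  apply Measure.integrableOn_of_bounded (M := 4 * lam / z ^ 2) measure_Ioc_lt_top.ne
    (fJ_meas lam z).aestronglyMeasurable
  filter_upwards [ae_restrict_mem measurableSet_Ioc] with s hs
  rw [Real.norm_eq_abs, abs_of_nonneg (fJ_nonneg lam z hs.1)]
  exact fJ_le_bound1 hlam hz hs.1

lemma integrableOn_fJ_Ioi1 {lam z : ℝ} (hlam : 0 < lam) (hz : 0 < z) :
    IntegrableOn (fJ lam z) (Ioi 1) := by
  apply Integrable.mono (exp_neg_integrableOn_Ioi 1 hlam) (fJ_meas lam z).aestronglyMeasurable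
  filter_upwards [ae_restrict_mem measurableSet_Ioi] with s hs
  have hs1 : (1:ℝ) ≤ s := le_of_lt hs
  rw [Real.norm_eq_abs, Real.norm_eq_abs,
    abs_of_nonneg (fJ_nonneg lam z (lt_of_lt_of_le one_pos hs1)),
    abs_of_pos (Real.exp_pos _)]
  exact fJ_le_exp hlam hz hs1

lemma integrableOn_fJ {lam z : ℝ} (hlam : 0 < lam) (hz : 0 < z) :
    IntegrableOn (fJ lam z) (Ioi 0) := by
  have := (integrableOn_fJ_Ioc hlam hz (b := 1)).union (integrableOn_fJ_Ioi1 hlam hz)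
  rwa [Ioc_union_Ioi_eq_Ioi one_pos.le] at this

lemma integral_exp_Ioi (lam : ℝ) (hlam : 0 < lam) :
    ∫ s in Ioi (0:ℝ), Real.exp (-lam * s) = lam⁻¹ := by
  have := integral_exp_neg_mul_rpow one_pos hlam
  simp only [Real.rpow_one] at this
  rw [this]; norm_num [Real.Gamma_two, Real.rpow_neg_one]

lemma J_sub_log {lam : ℝ} (hlam : 0 < lam) {z : ℝ} (hz : 0 < z) (hz1 : z < 1) :
    |(∫ s in Ioi (0:ℝ), fJ lam z s) - 2 * Real.log (1 / z)|
      ≤ 4 * lam + (lam + 1 / (4 * lam)) + lam⁻¹ := by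
  set a := z ^ 2 with ha_def
  have ha : 0 < a := by positivity
  have ha1 : a < 1 := by nlinarith
  have hz0 : z ≠ 0 := ne_of_gt hz
  -- split
  have hsplit : (∫ s in Ioi (0:ℝ), fJ lam z s)
      = (∫ s in Ioc (0:ℝ) a, fJ lam z s) + (∫ s in Ioc a 1, fJ lam z s)
        + (∫ s in Ioi (1:ℝ), fJ lam z s) := by
    have h1 : Ioc (0:ℝ) 1 = Ioc 0 a ∪ Ioc a 1 := (Ioc_union_Ioc_eq_Ioc ha.le ha1.le).symm
    have h2 : Ioi (0:ℝ) = Ioc 0 1 ∪ Ioi 1 := (Ioc_union_Ioi_eq_Ioi one_pos.le).symm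
    rw [h2, setIntegral_union (Ioc_disjoint_Ioi le_rfl) measurableSet_Ioi
      (integrableOn_fJ_Ioc hlam hz) (integrableOn_fJ_Ioi1 hlam hz), h1,
      setIntegral_union (Set.Ioc_disjoint_Ioc_of_le le_rfl) measurableSet_Ioc
      ((integrableOn_fJ_Ioc hlam hz).mono_set (Ioc_subset_Ioc_right ha1.le))
      ((integrableOn_fJ_Ioc hlam hz).mono_set (Ioc_subset_Ioc_left ha.le))]
  -- piece 1
  have hP1 : |∫ s in Ioc (0:ℝ) a, fJ lam z s| ≤ 4 * lam := by
    have hb := norm_setIntegral_le_of_norm_le_const (μ := volume) (s := Ioc (0:ℝ) a)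
      (C := 4 * lam / z ^ 2) measure_Ioc_lt_top
      (fun x hx => by
        rw [Real.norm_eq_abs, abs_of_nonneg (fJ_nonneg lam z hx.1)]
        exact fJ_le_bound1 hlam hz hx.1)
    rw [Real.norm_eq_abs, Real.volume_real_Ioc_of_le ha.le, sub_zero] at hb
    calc |∫ s in Ioc (0:ℝ) a, fJ lam z s| ≤ 4 * lam / z ^ 2 * a := hb
      _ = 4 * lam := by rw [ha_def]; field_simp
  -- piece 2
  have hfJ2 : IntegrableOn (fJ lam z) (Ioc a 1) :=
    (integrableOn_fJ_Ioc hlam hz).mono_set (Ioc_subset_Ioc_left ha.le)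
  have hinv_int : IntegrableOn (fun s : ℝ => s⁻¹) (Ioc a 1) := by
    apply Measure.integrableOn_of_bounded (M := a⁻¹) measure_Ioc_lt_top.ne
      measurable_inv.aestronglyMeasurable
    filter_upwards [ae_restrict_mem measurableSet_Ioc] with s hs
    have hs0 : 0 < s := lt_trans ha hs.1
    rw [Real.norm_eq_abs, abs_of_nonneg (inv_nonneg.2 hs0.le)]
    exact inv_anti₀ ha hs.1.le
  have hinv_val : (∫ s in Ioc a 1, s⁻¹) = 2 * Real.log (1 / z) := by
    rw [← intervalIntegral.integral_of_le ha1.le, integral_inv]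
    · rw [one_div, one_div, Real.log_inv, Real.log_inv, ha_def, Real.log_pow]
      push_cast; ring
    · rw [Set.uIcc_of_le ha1.le]
      rintro ⟨h0, -⟩; exact absurd h0 (not_le.2 ha)
  have hP2 : |(∫ s in Ioc a 1, fJ lam z s) - 2 * Real.log (1 / z)| ≤ lam + 1 / (4 * lam) := by
    rw [← hinv_val, ← integral_sub hfJ2 hinv_int]
    have hzpow : ∀ s : ℝ, (s ^ 2)⁻¹ = s ^ (-2:ℤ) := fun s => by
      rw [zpow_neg, ← zpow_natCast s 2]; norm_num
    set g : ℝ → ℝ := fun s => lam + z ^ 2 / (4 * lam) * s ^ (-2:ℤ) with hg_def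
    have h0uIcc : (0:ℝ) ∉ Set.uIcc a 1 := by
      rw [Set.uIcc_of_le ha1.le]
      rintro ⟨h0, -⟩; exact absurd h0 (not_le.2 ha)
    have hg_ii : IntervalIntegrable g volume a 1 :=
      intervalIntegrable_const.add ((intervalIntegral.intervalIntegrable_zpow (Or.inr h0uIcc)).const_mul _)
    have hg_int : IntegrableOn g (Ioc a 1) :=
      (intervalIntegrable_iff_integrableOn_Ioc_of_le ha1.le).1 hg_ii
    have hbd : ∀ᵐ s ∂(volume.restrict (Ioc a 1)), ‖fJ lam z s - s⁻¹‖ ≤ g s := by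
      filter_upwards [ae_restrict_mem measurableSet_Ioc] with s hs
      have hs0 : 0 < s := lt_trans ha hs.1
      have hw : 0 ≤ z ^ 2 / (4 * lam * s) := div_nonneg (sq_nonneg z) (by nlinarith)
      have hc : 0 ≤ lam * s + z ^ 2 / (4 * lam * s) := by nlinarith
      have heq : fJ lam z s - s⁻¹ = s⁻¹ * (Real.exp (-(lam * s + z ^ 2 / (4 * lam * s))) - 1) := by
        rw [fJ, Real.rpow_neg_one]
        ring_nf
      rw [heq, Real.norm_eq_abs, abs_mul, abs_of_nonneg (inv_nonneg.2 hs0.le), abs_sub_comm,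
        abs_of_nonneg (by linarith [Real.exp_le_one_iff.2 (by linarith : -(lam * s + z ^ 2 / (4 * lam * s)) ≤ 0)])]
      have h1 : 1 - Real.exp (-(lam * s + z ^ 2 / (4 * lam * s)))
          ≤ lam * s + z ^ 2 / (4 * lam * s) := by
        linarith [Real.add_one_le_exp (-(lam * s + z ^ 2 / (4 * lam * s)))]
      calc s⁻¹ * (1 - Real.exp (-(lam * s + z ^ 2 / (4 * lam * s))))
          ≤ s⁻¹ * (lam * s + z ^ 2 / (4 * lam * s)) :=
            mul_le_mul_of_nonneg_left h1 (inv_nonneg.2 hs0.le)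
        _ = lam + z ^ 2 / (4 * lam) * (s ^ 2)⁻¹ := by field_simp
        _ = g s := by rw [hg_def]; simp only [hzpow]
    have hnorm := norm_integral_le_of_norm_le hg_int hbd
    rw [Real.norm_eq_abs] at hnorm
    have hgval : (∫ s in Ioc a 1, g s) = lam * (1 - a) + z ^ 2 / (4 * lam) * (a⁻¹ - 1) := by
      rw [← intervalIntegral.integral_of_le ha1.le, hg_def]
      rw [intervalIntegral.integral_add intervalIntegrable_const
        ((intervalIntegral.intervalIntegrable_zpow (Or.inr h0uIcc)).const_mul _),
        intervalIntegral.integral_const, intervalIntegral.integral_const_mul,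
        integral_zpow (Or.inr ⟨by norm_num, h0uIcc⟩)]
      norm_num
      ring
    refine hnorm.trans ?_
    rw [hgval, ha_def]
    have h4 : z ^ 2 / (4 * lam) * (z ^ 2)⁻¹ = 1 / (4 * lam) := by
      field_simp
    nlinarith [sq_nonneg z, div_nonneg (sq_nonneg z) (by linarith : (0:ℝ) ≤ 4 * lam)]
  -- piece 3
  have hP3a : 0 ≤ ∫ s in Ioi (1:ℝ), fJ lam z s :=
    setIntegral_nonneg measurableSet_Ioi fun s hs => fJ_nonneg lam z (lt_trans one_pos hs)
  have hP3b : (∫ s in Ioi (1:ℝ), fJ lam z s) ≤ lam⁻¹ := by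
    have h1 : (∫ s in Ioi (1:ℝ), fJ lam z s) ≤ ∫ s in Ioi (1:ℝ), Real.exp (-lam * s) :=
      setIntegral_mono_on (integrableOn_fJ_Ioi1 hlam hz)
        ((exp_neg_integrableOn_Ioi 1 hlam)) measurableSet_Ioi
        (fun s hs => fJ_le_exp hlam hz (le_of_lt hs))
    have h2 : (∫ s in Ioi (1:ℝ), Real.exp (-lam * s)) ≤ ∫ s in Ioi (0:ℝ), Real.exp (-lam * s) :=
      setIntegral_mono_set (exp_neg_integrableOn_Ioi 0 hlam)
        (Eventually.of_forall fun s => (Real.exp_pos _).le)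
        (HasSubset.Subset.eventuallyLE (Ioi_subset_Ioi one_pos.le))
    rw [integral_exp_Ioi lam hlam] at h2
    linarith
  -- combine
  rw [hsplit]
  have htri : |(∫ s in Ioc (0:ℝ) a, fJ lam z s) + (∫ s in Ioc a 1, fJ lam z s)
      + (∫ s in Ioi (1:ℝ), fJ lam z s) - 2 * Real.log (1 / z)|
      ≤ |∫ s in Ioc (0:ℝ) a, fJ lam z s|
        + |(∫ s in Ioc a 1, fJ lam z s) - 2 * Real.log (1 / z)|
        + |∫ s in Ioi (1:ℝ), fJ lam z s| := by
    have := abs_add_le (((∫ s in Ioc (0:ℝ) a, fJ lam z s)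
      + ((∫ s in Ioc a 1, fJ lam z s) - 2 * Real.log (1 / z))))
      (∫ s in Ioi (1:ℝ), fJ lam z s)
    have h2 := abs_add_le (∫ s in Ioc (0:ℝ) a, fJ lam z s)
      ((∫ s in Ioc a 1, fJ lam z s) - 2 * Real.log (1 / z))
    calc |(∫ s in Ioc (0:ℝ) a, fJ lam z s) + (∫ s in Ioc a 1, fJ lam z s)
        + (∫ s in Ioi (1:ℝ), fJ lam z s) - 2 * Real.log (1 / z)|
        = |((∫ s in Ioc (0:ℝ) a, fJ lam z s)
          + ((∫ s in Ioc a 1, fJ lam z s) - 2 * Real.log (1 / z)))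
          + (∫ s in Ioi (1:ℝ), fJ lam z s)| := by ring_nf
      _ ≤ _ := by linarith
  have h3abs : |∫ s in Ioi (1:ℝ), fJ lam z s| ≤ lam⁻¹ := by
    rw [abs_of_nonneg hP3a]; exact hP3b
  linarith

lemma tendsto_log_one_div_aux : Tendsto (fun z : ℝ => Real.log (1 / z)) (nhdsWithin 0 (Ioi 0)) atTop := by
  have h1 : Tendsto Real.log (nhdsWithin 0 (Ioi 0)) atBot :=
    Real.tendsto_log_nhdsGT_zero
  have h2 : Tendsto (fun z : ℝ => -Real.log z) (nhdsWithin 0 (Ioi 0)) atTop :=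
    tendsto_neg_atBot_atTop.comp h1
  refine h2.congr fun z => ?_
  rw [one_div, Real.log_inv]

lemma tendsto_J (lam : ℝ) (hlam : 0 < lam) :
    Tendsto (fun z : ℝ => (∫ s in Ioi (0:ℝ), fJ lam z s) / Real.log (1 / z))
      (nhdsWithin 0 (Ioi 0)) (nhds 2) := by
  set M := 4 * lam + (lam + 1 / (4 * lam)) + lam⁻¹ with hM_def
  have hmem : Ioo (0:ℝ) 1 ∈ nhdsWithin (0:ℝ) (Ioi 0) :=
    Ioo_mem_nhdsGT_of_mem (by constructor <;> norm_num)
  have hMz : Tendsto (fun z : ℝ => M / Real.log (1 / z)) (nhdsWithin 0 (Ioi 0)) (nhds 0) :=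
    Tendsto.div_atTop tendsto_const_nhds tendsto_log_one_div_aux
  have hzero : Tendsto
      (fun z : ℝ => ((∫ s in Ioi (0:ℝ), fJ lam z s) - 2 * Real.log (1 / z)) / Real.log (1 / z))
      (nhdsWithin 0 (Ioi 0)) (nhds 0) := by
    apply squeeze_zero_norm' ?_ hMz
    filter_upwards [hmem] with z hz
    have hL : 0 < Real.log (1 / z) := by
      apply Real.log_pos
      rw [lt_div_iff₀ hz.1, one_mul]; exact hz.2
    rw [Real.norm_eq_abs, abs_div, abs_of_pos hL]
    have hb := J_sub_log hlam hz.1 hz.2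
    rw [div_le_div_iff₀ hL hL] at *
    nlinarith
  have heq : ∀ᶠ z in nhdsWithin (0:ℝ) (Ioi 0),
      ((∫ s in Ioi (0:ℝ), fJ lam z s) - 2 * Real.log (1 / z)) / Real.log (1 / z) + 2
        = (∫ s in Ioi (0:ℝ), fJ lam z s) / Real.log (1 / z) := by
    filter_upwards [hmem] with z hz
    have hL : Real.log (1 / z) ≠ 0 := by
      apply ne_of_gt; apply Real.log_pos
      rw [lt_div_iff₀ hz.1, one_mul]; exact hz.2
    field_simp
    ring
  have := hzero.add (tendsto_const_nhds (x := (2:ℝ)))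
  rw [zero_add] at this
  exact Tendsto.congr' heq this

/-- For even `n` and `k = n/2 − 1` (so `ν = 0`), the consecutive-generation ratio
diverges logarithmically at the origin: `γ_k(z)/log(1/z) → n/B` as `z → 0⁺`. -/
theorem genRatio_log_divergence
    (n : ℕ) (hn : 2 ≤ n) (heven : Even n) (lam D B mu : ℝ)
    (hlam : 0 < lam) (hD : 0 < D) (hB : 0 < B) (hmu : 0 < mu)
    (k : ℕ) (hk : k = n / 2 - 1) :
    Filter.Tendsto (fun z : ℝ => genRatio n lam D B mu k z / Real.log (1 / z))
      (nhdsWithin 0 (Set.Ioi 0)) (nhds ((n : ℝ) / B)) := by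
  obtain ⟨m, hm⟩ := heven
  have hm1 : 1 ≤ m := by omega
  have hkm : k = m - 1 := by omega
  have hkc : (k:ℝ) = (m:ℝ) - 1 := by
    rw [hkm, Nat.cast_sub hm1, Nat.cast_one]
  have hnc : (n:ℝ) = 2 * m := by rw [hm]; push_cast; ring
  have hexp1 : (k:ℝ) - (n:ℝ)/2 = -1 := by rw [hkc, hnc]; ring
  have hexp2 : ((k:ℕ)+1:ℝ) - (n:ℝ)/2 = 0 := by rw [hkc, hnc]; ring
  set X : ℝ := (4 * π * D) ^ ((n:ℝ)/2) with hX_def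
  have hXpos : 0 < X := Real.rpow_pos_of_pos (by positivity) _
  set C1 : ℝ := mu * (lam*B)^k / ((Nat.factorial k : ℝ) * X) with hC1_def
  set C2 : ℝ := mu * (lam*B)^(k+1) / ((Nat.factorial (k+1) : ℝ) * X) with hC2_def
  have hfun : ∀ z : ℝ, (C1 / C2) * (((∫ s in Ioi (0:ℝ), fJ lam z s) / Real.log (1/z))
          / (∫ s in Ioi (0:ℝ), Real.exp (-lam * s - z^2/(4*lam*s))))
      = genRatio n lam D B mu k z / Real.log (1/z) := by
    intro z
    unfold genRatio steadyDensity
    rw [hexp1]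
    have e2 : ∀ s : ℝ, s ^ (((k+1:ℕ)):ℝ) = s ^ ((k:ℝ)+1) := by intro s; norm_num
    simp only [Nat.cast_add, Nat.cast_one, hexp2, Real.rpow_zero, one_mul]
    rw [← hX_def, ← hC1_def, ← hC2_def]
    have : (∫ s in Ioi (0:ℝ), s ^ (-1:ℝ) * Real.exp (-lam * s - z ^ 2 / (4 * lam * s)))
        = ∫ s in Ioi (0:ℝ), fJ lam z s := rfl
    rw [this]
    ring
  have hlim : Tendsto (fun z : ℝ => (C1 / C2) * (((∫ s in Ioi (0:ℝ), fJ lam z s) / Real.log (1/z))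
          / (∫ s in Ioi (0:ℝ), Real.exp (-lam * s - z^2/(4*lam*s)))))
      (nhdsWithin 0 (Ioi 0)) (nhds ((C1/C2) * (2 / lam⁻¹))) :=
    Tendsto.const_mul _ ((tendsto_J lam hlam).div (tendsto_I1 lam hlam) (inv_ne_zero hlam.ne'))
  have hval : (C1/C2) * (2 / lam⁻¹) = (n:ℝ) / B := by
    have hfact : (Nat.factorial (k+1) : ℝ) = ((k:ℝ)+1) * (Nat.factorial k : ℝ) := by
      rw [Nat.factorial_succ]; push_cast; ring
    have hn2 : (n:ℝ) = 2*((k:ℝ)+1) := by rw [hnc, hkc]; ring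
    rw [hC1_def, hC2_def, hfact, hn2, pow_succ]
    have hfk : (Nat.factorial k : ℝ) ≠ 0 := Nat.cast_ne_zero.2 (Nat.factorial_ne_zero k)
    have hlb : lam * B ≠ 0 := by positivity
    have hk1 : ((k:ℝ)+1) ≠ 0 := by positivity
    field_simp
  rw [← hval]
  exact hlim.congr hfun
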